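/- Let X be a locally compact Hausdorff space. If every boundary-perfect map f : X → Y to a Hausdorff space Y has at most one non-compact fiber (i.e., at most one y ∈ Y with f⁻¹(y) not compact), then X is a J-space. -/

import Mathlib

/-- A Hausdorff space `X` is a *J-space* if whenever `A`, `B` are closed sets with
`A ∪ B = X` and `A ∩ B` compact, then `A` or `B` is compact. -/
def IsJSpace (X : Type*) [TopologicalSpace X] : Prop :=
  ∀ A B : Set X, IsClosed A → IsClosed B → A ∪ B = Set.univ →
    IsCompact (A ∩ B) → IsCompact A ∨ IsCompact B

/-- A Hausdorff space `X` is a *strong J-space* if every compact `K ⊆ X` is contained in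
a compact `L ⊆ X` with `X \ L` connected (the empty set counting as connected). -/
def IsStrongJSpace (X : Type*) [TopologicalSpace X] : Prop :=
  ∀ K : Set X, IsCompact K → ∃ L : Set X, IsCompact L ∧ K ⊆ L ∧ IsPreconnected Lᶜ

/-- A map is *perfect* if it is closed and all fibers are compact. -/
def IsPerfectMap {X Y : Type*} [TopologicalSpace X] [TopologicalSpace Y] (f : X → Y) : Prop :=
  IsClosedMap f ∧ ∀ y : Y, IsCompact (f ⁻¹' {y})

/-- A map is *boundary-perfect* if it is closed and the topological boundary of each
fiber is compact. -/
def IsBoundaryPerfectMap {X Y : Type*} [TopologicalSpace X] [TopologicalSpace Y]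
    (f : X → Y) : Prop :=
  IsClosedMap f ∧ ∀ y : Y, IsCompact (frontier (f ⁻¹' {y}))

/-- If `X` is locally compact Hausdorff and every boundary-perfect map from `X` has at
most one non-compact fiber, then `X` is a J-space. -/
theorem isJSpace_of_locallyCompact_of_boundaryPerfect_atMostOne_noncompact_fiber
    (X : Type u) [TopologicalSpace X] [T2Space X] [LocallyCompactSpace X]
    (h : ∀ (Y : Type u) [TopologicalSpace Y] [T2Space Y],
      ∀ f : X → Y, Continuous f → IsBoundaryPerfectMap f →
        ∀ y₁ y₂ : Y, ¬IsCompact (f ⁻¹' {y₁}) → ¬IsCompact (f ⁻¹' {y₂}) → y₁ = y₂) :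
    IsJSpace X := by
  intro A B hA hB hABu hK
  by_contra hnc
  push_neg at hnc
  obtain ⟨hcA, hcB⟩ := hnc
  -- an open set `U ⊇ A ∩ B` with compact closure
  obtain ⟨K', hK'c, hKU⟩ := exists_compact_superset hK
  set U : Set X := interior K' with hUdef
  have hUo : IsOpen U := isOpen_interior
  have hclU : IsCompact (closure U) :=
    hK'c.of_isClosed_subset isClosed_closure (closure_minimal interior_subset hK'c.isClosed)
  set Sa : Set X := A \ U with hSadef
  set Sb : Set X := B \ U with hSbdef
  have hSaB : ∀ x, x ∈ Sa → x ∉ B := fun x hx hxB => hx.2 (hKU ⟨hx.1, hxB⟩)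
  have hSbA : ∀ x, x ∈ Sb → x ∉ A := fun x hx hxA => hx.2 (hKU ⟨hxA, hx.1⟩)
  have hdisj : ∀ x, x ∈ Sa → x ∈ Sb → False := fun x hxa hxb => hSaB x hxa hxb.1
  have hSac : IsClosed Sa := hA.sdiff hUo
  have hSbc : IsClosed Sb := hB.sdiff hUo
  have hSanc : ¬ IsCompact Sa := by
    intro hc
    apply hcA
    have : A = Sa ∪ (closure U ∩ A) := by
      ext x
      constructor
      · intro hx
        by_cases hxU : x ∈ U
        · exact Or.inr ⟨subset_closure hxU, hx⟩
        · exact Or.inl ⟨hx, hxU⟩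
      · rintro (hx | hx)
        · exact hx.1
        · exact hx.2
    rw [this]
    exact hc.union (hclU.inter_right hA)
  have hSbnc : ¬ IsCompact Sb := by
    intro hc
    apply hcB
    have : B = Sb ∪ (closure U ∩ B) := by
      ext x
      constructor
      · intro hx
        by_cases hxU : x ∈ U
        · exact Or.inr ⟨subset_closure hxU, hx⟩
        · exact Or.inl ⟨hx, hxU⟩
      · rintro (hx | hx)
        · exact hx.1
        · exact hx.2
    rw [this]
    exact hc.union (hclU.inter_right hB)
  obtain ⟨xa, hxa⟩ : Sa.Nonempty := by
    by_contra hne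
    rw [Set.not_nonempty_iff_eq_empty] at hne
    exact hSanc (hne ▸ isCompact_empty)
  obtain ⟨xb, hxb⟩ : Sb.Nonempty := by
    by_contra hne
    rw [Set.not_nonempty_iff_eq_empty] at hne
    exact hSbnc (hne ▸ isCompact_empty)
  -- the quotient collapsing `Sa` and `Sb` to points
  letI s : Setoid X :=
    ⟨fun x y => x = y ∨ (x ∈ Sa ∧ y ∈ Sa) ∨ (x ∈ Sb ∧ y ∈ Sb),
      ⟨fun _ => Or.inl rfl,
        by
          rintro x y (rfl | ⟨h1, h2⟩ | ⟨h1, h2⟩)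
          · exact Or.inl rfl
          · exact Or.inr (Or.inl ⟨h2, h1⟩)
          · exact Or.inr (Or.inr ⟨h2, h1⟩),
        by
          rintro x y z (rfl | ⟨h1, h2⟩ | ⟨h1, h2⟩) hyz
          · exact hyz
          · rcases hyz with rfl | ⟨h3, h4⟩ | ⟨h3, h4⟩
            · exact Or.inr (Or.inl ⟨h1, h2⟩)
            · exact Or.inr (Or.inl ⟨h1, h4⟩)
            · exact absurd (hdisj y h2 h3) (by simp)
          · rcases hyz with rfl | ⟨h3, h4⟩ | ⟨h3, h4⟩
            · exact Or.inr (Or.inr ⟨h1, h2⟩)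
            · exact absurd (hdisj y h3 h2) (by simp)
            · exact Or.inr (Or.inr ⟨h1, h4⟩)⟩⟩
  have hrel : ∀ x y : X, (x ≈ y) = (x = y ∨ (x ∈ Sa ∧ y ∈ Sa) ∨ (x ∈ Sb ∧ y ∈ Sb)) :=
    fun _ _ => rfl
  set f : X → Quotient s := Quotient.mk s with hfdef
  have hq : Topology.IsQuotientMap f := isQuotientMap_quot_mk
  have hcont : Continuous f := hq.continuous
  -- saturated sets
  have hsat : ∀ V : Set X, (Sa ⊆ V ∨ V ∩ Sa = ∅) → (Sb ⊆ V ∨ V ∩ Sb = ∅) →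
      ∀ p q : X, p ≈ q → p ∈ V → q ∈ V := by
    intro V hVa hVb p q hpq hp
    rcases hpq with rfl | ⟨h1, h2⟩ | ⟨h1, h2⟩
    · exact hp
    · rcases hVa with hVa | hVa
      · exact hVa h2
      · exact absurd (Set.mem_inter hp h1) (by rw [hVa]; simp)
    · rcases hVb with hVb | hVb
      · exact hVb h2
      · exact absurd (Set.mem_inter hp h1) (by rw [hVb]; simp)
  have hmem : ∀ (C : Set X) (x : X), x ∈ f ⁻¹' (f '' C) ↔ ∃ c ∈ C, c ≈ x := by
    intro C x
    constructor
    · rintro ⟨c, hc, hcx⟩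
      exact ⟨c, hc, Quotient.exact hcx⟩
    · rintro ⟨c, hc, hcx⟩
      exact ⟨c, hc, Quotient.sound hcx⟩
  have hpre : ∀ V : Set X, (∀ p q : X, p ≈ q → p ∈ V → q ∈ V) → f ⁻¹' (f '' V) = V := by
    intro V hV
    ext x
    rw [hmem]
    constructor
    · rintro ⟨c, hc, hcx⟩
      exact hV c x hcx hc
    · intro hx
      exact ⟨x, hx, Setoid.refl x⟩
  -- `f` is a closed map
  have hclosedmap : IsClosedMap f := by
    intro C hC
    rw [← hq.isClosed_preimage]
    by_cases ha : (C ∩ Sa).Nonempty <;> by_cases hb : (C ∩ Sb).Nonempty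
    · have : f ⁻¹' (f '' C) = C ∪ Sa ∪ Sb := by
        ext x
        rw [hmem]
        constructor
        · rintro ⟨c, hc, rfl | ⟨h1, h2⟩ | ⟨h1, h2⟩⟩
          · exact Or.inl (Or.inl hc)
          · exact Or.inl (Or.inr h2)
          · exact Or.inr h2
        · rintro ((hx | hx) | hx)
          · exact ⟨x, hx, Setoid.refl x⟩
          · obtain ⟨c, hcC, hcS⟩ := ha
            exact ⟨c, hcC, Or.inr (Or.inl ⟨hcS, hx⟩)⟩
          · obtain ⟨c, hcC, hcS⟩ := hb
            exact ⟨c, hcC, Or.inr (Or.inr ⟨hcS, hx⟩)⟩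
      rw [this]
      exact (hC.union hSac).union hSbc
    · have : f ⁻¹' (f '' C) = C ∪ Sa := by
        ext x
        rw [hmem]
        constructor
        · rintro ⟨c, hc, rfl | ⟨h1, h2⟩ | ⟨h1, h2⟩⟩
          · exact Or.inl hc
          · exact Or.inr h2
          · exact absurd ⟨c, hc, h1⟩ hb
        · rintro (hx | hx)
          · exact ⟨x, hx, Setoid.refl x⟩
          · obtain ⟨c, hcC, hcS⟩ := ha
            exact ⟨c, hcC, Or.inr (Or.inl ⟨hcS, hx⟩)⟩
      rw [this]
      exact hC.union hSac
    · have : f ⁻¹' (f '' C) = C ∪ Sb := by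
        ext x
        rw [hmem]
        constructor
        · rintro ⟨c, hc, rfl | ⟨h1, h2⟩ | ⟨h1, h2⟩⟩
          · exact Or.inl hc
          · exact absurd ⟨c, hc, h1⟩ ha
          · exact Or.inr h2
        · rintro (hx | hx)
          · exact ⟨x, hx, Setoid.refl x⟩
          · obtain ⟨c, hcC, hcS⟩ := hb
            exact ⟨c, hcC, Or.inr (Or.inr ⟨hcS, hx⟩)⟩
      rw [this]
      exact hC.union hSbc
    · have : f ⁻¹' (f '' C) = C := by
        ext x
        rw [hmem]
        constructor
        · rintro ⟨c, hc, rfl | ⟨h1, h2⟩ | ⟨h1, h2⟩⟩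
          · exact hc
          · exact absurd ⟨c, hc, h1⟩ ha
          · exact absurd ⟨c, hc, h1⟩ hb
        · intro hx
          exact ⟨x, hx, Setoid.refl x⟩
      rw [this]
      exact hC
  -- separation in the quotient by disjoint saturated open sets
  have hsep : ∀ Va Vb : Set X, IsOpen Va → IsOpen Vb →
      (∀ p q : X, p ≈ q → p ∈ Va → q ∈ Va) → (∀ p q : X, p ≈ q → p ∈ Vb → q ∈ Vb) →
      Va ∩ Vb = ∅ → ∀ x ∈ Va, ∀ y ∈ Vb,
      ∃ u v : Set (Quotient s), IsOpen u ∧ IsOpen v ∧ f x ∈ u ∧ f y ∈ v ∧ Disjoint u v := by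
    intro Va Vb hVao hVbo hVas hVbs hVV x hx y hy
    refine ⟨f '' Va, f '' Vb, ?_, ?_, ⟨x, hx, rfl⟩, ⟨y, hy, rfl⟩, ?_⟩
    · rw [← hq.isOpen_preimage, hpre Va hVas]; exact hVao
    · rw [← hq.isOpen_preimage, hpre Vb hVbs]; exact hVbo
    · rw [Set.disjoint_left]
      rintro t ⟨p, hp, rfl⟩ ⟨q, hq', hqp⟩
      have : q ∈ Va := hVas p q (Setoid.symm (Quotient.exact hqp)) hp
      exact absurd (Set.mem_inter this hq') (by rw [hVV]; simp)
  have hSaBc : Sa ⊆ Bᶜ := fun x hx => hSaB x hx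
  have hSbAc : Sb ⊆ Aᶜ := fun x hx => hSbA x hx
  -- the quotient is Hausdorff
  haveI hT2 : T2Space (Quotient s) := by
    constructor
    intro a b hab
    obtain ⟨x⟩ := a
    obtain ⟨y⟩ := b
    have hab' : ¬ (x ≈ y) := fun hxy => hab (Quotient.sound hxy)
    -- helper to handle "one point in Sa ∪ Sb, other outside"
    have houtside : ∀ z w : X, z ∈ Sa ∪ Sb → w ∉ Sa ∪ Sb →
        ∃ u v : Set (Quotient s), IsOpen u ∧ IsOpen v ∧ f z ∈ u ∧ f w ∈ v ∧ Disjoint u v := by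
      intro z w hz hw
      have hnw : (Sa ∪ Sb)ᶜ ∈ nhds w := ((hSac.union hSbc).isOpen_compl).mem_nhds hw
      obtain ⟨N, hN, hNc, hNsub⟩ := exists_mem_nhds_isClosed_subset hnw
      refine hsep Nᶜ (interior N) hNc.isOpen_compl isOpen_interior ?_ ?_ ?_ z ?_ w ?_
      · refine hsat _ (Or.inl ?_) (Or.inl ?_)
        · intro p hp hpN
          exact (hNsub hpN) (Or.inl hp)
        · intro p hp hpN
          exact (hNsub hpN) (Or.inr hp)
      · refine hsat _ (Or.inr ?_) (Or.inr ?_)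
        · ext p
          simp only [Set.mem_inter_iff, Set.mem_empty_iff_false, iff_false, not_and]
          intro hp hpa
          exact (hNsub (interior_subset hp)) (Or.inl hpa)
        · ext p
          simp only [Set.mem_inter_iff, Set.mem_empty_iff_false, iff_false, not_and]
          intro hp hpb
          exact (hNsub (interior_subset hp)) (Or.inr hpb)
      · ext p
        simp only [Set.mem_inter_iff, Set.mem_compl_iff, Set.mem_empty_iff_false, iff_false,
          not_and]
        intro hp hp2
        exact hp (interior_subset hp2)
      · intro hzN
        rcases hz with hz | hz
        · exact (hNsub hzN) (Or.inl hz)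
        · exact (hNsub hzN) (Or.inr hz)
      · exact mem_interior_iff_mem_nhds.mpr hN
    by_cases hxS : x ∈ Sa ∪ Sb <;> by_cases hyS : y ∈ Sa ∪ Sb
    · -- both in Sa ∪ Sb: must be in different pieces
      rcases hxS with hxa' | hxb' <;> rcases hyS with hya' | hyb'
      · exact absurd (Or.inr (Or.inl ⟨hxa', hya'⟩)) hab'
      · refine hsep Bᶜ Aᶜ hB.isOpen_compl hA.isOpen_compl ?_ ?_ ?_ x (hSaBc hxa') y (hSbAc hyb')
        · refine hsat _ (Or.inl hSaBc) (Or.inr ?_)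
          ext p
          simp only [Set.mem_inter_iff, Set.mem_compl_iff, Set.mem_empty_iff_false, iff_false,
            not_and]
          intro hp hpb
          exact hp hpb.1
        · refine hsat _ (Or.inr ?_) (Or.inl hSbAc)
          ext p
          simp only [Set.mem_inter_iff, Set.mem_compl_iff, Set.mem_empty_iff_false, iff_false,
            not_and]
          intro hp hpa
          exact hp hpa.1
        · ext p
          simp only [Set.mem_inter_iff, Set.mem_compl_iff, Set.mem_empty_iff_false, iff_false,
            not_and]
          intro hp hpA
          rcases (Set.eq_univ_iff_forall.mp hABu p) with hpa | hpb
          · exact hpA hpa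
          · exact hp hpb
      · obtain ⟨u, v, hu, hv, hzu, hwv, huv⟩ :=
          hsep Aᶜ Bᶜ hA.isOpen_compl hB.isOpen_compl
            (by
              refine hsat _ (Or.inr ?_) (Or.inl hSbAc)
              ext p
              simp only [Set.mem_inter_iff, Set.mem_compl_iff, Set.mem_empty_iff_false, iff_false,
                not_and]
              intro hp hpa
              exact hp hpa.1)
            (by
              refine hsat _ (Or.inl hSaBc) (Or.inr ?_)
              ext p
              simp only [Set.mem_inter_iff, Set.mem_compl_iff, Set.mem_empty_iff_false, iff_false,
                not_and]
              intro hp hpb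
              exact hp hpb.1)
            (by
              ext p
              simp only [Set.mem_inter_iff, Set.mem_compl_iff, Set.mem_empty_iff_false, iff_false,
                not_and]
              intro hp hpB
              rcases (Set.eq_univ_iff_forall.mp hABu p) with hpa | hpb
              · exact hp hpa
              · exact hpB hpb)
            x (hSbAc hxb') y (hSaBc hya')
        exact ⟨u, v, hu, hv, hzu, hwv, huv⟩
      · exact absurd (Or.inr (Or.inr ⟨hxb', hyb'⟩)) hab'
    · exact houtside x y hxS hyS
    · obtain ⟨u, v, hu, hv, hyu, hxv, huv⟩ := houtside y x hyS hxS
      exact ⟨v, u, hv, hu, hxv, hyu, huv.symm⟩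
    · -- both outside: singletons, separate in X
      have hxy : x ≠ y := fun hh => hab' (Or.inl hh)
      obtain ⟨Vx, Vy, hVxo, hVyo, hxVx, hyVy, hVxy⟩ := t2_separation hxy
      have hSo : IsOpen (Sa ∪ Sb)ᶜ := (hSac.union hSbc).isOpen_compl
      refine hsep (Vx ∩ (Sa ∪ Sb)ᶜ) (Vy ∩ (Sa ∪ Sb)ᶜ) (hVxo.inter hSo) (hVyo.inter hSo)
        ?_ ?_ ?_ x ⟨hxVx, hxS⟩ y ⟨hyVy, hyS⟩
      · refine hsat _ (Or.inr ?_) (Or.inr ?_) <;>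
        · ext p
          simp only [Set.mem_inter_iff, Set.mem_compl_iff, Set.mem_empty_iff_false, iff_false,
            not_and]
          intro hp hps
          exact (hp.2 (by simp [hps])).elim
      · refine hsat _ (Or.inr ?_) (Or.inr ?_) <;>
        · ext p
          simp only [Set.mem_inter_iff, Set.mem_compl_iff, Set.mem_empty_iff_false, iff_false,
            not_and]
          intro hp hps
          exact (hp.2 (by simp [hps])).elim
      · ext p
        simp only [Set.mem_inter_iff, Set.mem_empty_iff_false, iff_false]
        rintro ⟨⟨h1, -⟩, ⟨h2, -⟩⟩
        exact (Set.disjoint_left.mp hVxy h1) h2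
  -- fibers
  have hfibSa : f ⁻¹' {f xa} = Sa := by
    ext z
    simp only [Set.mem_preimage, Set.mem_singleton_iff]
    constructor
    · intro hz
      rcases Quotient.exact hz with rfl | ⟨h1, h2⟩ | ⟨h1, h2⟩
      · exact hxa
      · exact h1
      · exact absurd (hdisj xa hxa h2) (by simp)
    · intro hz
      exact Quotient.sound (Or.inr (Or.inl ⟨hz, hxa⟩))
  have hfibSb : f ⁻¹' {f xb} = Sb := by
    ext z
    simp only [Set.mem_preimage, Set.mem_singleton_iff]
    constructor
    · intro hz
      rcases Quotient.exact hz with rfl | ⟨h1, h2⟩ | ⟨h1, h2⟩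
      · exact hxb
      · exact absurd (hdisj xb h2 hxb) (by simp)
      · exact h1
    · intro hz
      exact Quotient.sound (Or.inr (Or.inr ⟨hz, hxb⟩))
  -- f is boundary-perfect
  have hbd : IsBoundaryPerfectMap f := by
    refine ⟨hclosedmap, ?_⟩
    intro y
    obtain ⟨x⟩ := y
    have hfx : f ⁻¹' {f x} = f ⁻¹' {Quot.mk Setoid.r x} := rfl
    by_cases hxS : x ∈ Sa
    · have : f ⁻¹' {Quot.mk Setoid.r x} = Sa := by
        rw [← hfx]
        ext z
        simp only [Set.mem_preimage, Set.mem_singleton_iff]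
        constructor
        · intro hz
          rcases Quotient.exact hz with rfl | ⟨h1, h2⟩ | ⟨h1, h2⟩
          · exact hxS
          · exact h1
          · exact absurd (hdisj x hxS h2) (by simp)
        · intro hz
          exact Quotient.sound (Or.inr (Or.inl ⟨hz, hxS⟩))
      change IsCompact (frontier (f ⁻¹' {f x})); rw [show f ⁻¹' {f x} = Sa from this]
      have hsub : frontier Sa ⊆ (A ∩ B) ∪ closure U := by
        intro p hp
        have hp1 : p ∈ Sa := hSac.closure_eq ▸ hp.1
        have hp2 : p ∈ closure Saᶜ := by rw [closure_compl]; exact hp.2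
        have hcc : Saᶜ ⊆ B ∪ U := by
          intro q hq
          simp only [hSadef, Set.mem_compl_iff, Set.mem_diff, not_and, not_not] at hq
          by_cases hqA : q ∈ A
          · exact Or.inr (hq hqA)
          · rcases (Set.eq_univ_iff_forall.mp hABu q) with hqa | hqb
            · exact absurd hqa hqA
            · exact Or.inl hqb
        have : p ∈ closure (B ∪ U) := closure_mono hcc hp2
        rw [closure_union, hB.closure_eq] at this
        rcases this with hpB | hpU
        · exact Or.inl ⟨hp1.1, hpB⟩
        · exact Or.inr hpU
      exact (hK.union hclU).of_isClosed_subset isClosed_frontier hsub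
    · by_cases hxS' : x ∈ Sb
      · have : f ⁻¹' {Quot.mk Setoid.r x} = Sb := by
          rw [← hfx]
          ext z
          simp only [Set.mem_preimage, Set.mem_singleton_iff]
          constructor
          · intro hz
            rcases Quotient.exact hz with rfl | ⟨h1, h2⟩ | ⟨h1, h2⟩
            · exact hxS'
            · exact absurd (hdisj x h2 hxS') (by simp)
            · exact h1
          · intro hz
            exact Quotient.sound (Or.inr (Or.inr ⟨hz, hxS'⟩))
        change IsCompact (frontier (f ⁻¹' {f x})); rw [show f ⁻¹' {f x} = Sb from this]
        have hsub : frontier Sb ⊆ (A ∩ B) ∪ closure U := by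
          intro p hp
          have hp1 : p ∈ Sb := hSbc.closure_eq ▸ hp.1
          have hp2 : p ∈ closure Sbᶜ := by rw [closure_compl]; exact hp.2
          have hcc : Sbᶜ ⊆ A ∪ U := by
            intro q hq
            simp only [hSbdef, Set.mem_compl_iff, Set.mem_diff, not_and, not_not] at hq
            by_cases hqB : q ∈ B
            · exact Or.inr (hq hqB)
            · rcases (Set.eq_univ_iff_forall.mp hABu q) with hqa | hqb
              · exact Or.inl hqa
              · exact absurd hqb hqB
          have : p ∈ closure (A ∪ U) := closure_mono hcc hp2
          rw [closure_union, hA.closure_eq] at this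
          rcases this with hpA | hpU
          · exact Or.inl ⟨hpA, hp1.1⟩
          · exact Or.inr hpU
        exact (hK.union hclU).of_isClosed_subset isClosed_frontier hsub
      · have : f ⁻¹' {Quot.mk Setoid.r x} = {x} := by
          rw [← hfx]
          ext z
          simp only [Set.mem_preimage, Set.mem_singleton_iff]
          constructor
          · intro hz
            rcases Quotient.exact hz with rfl | ⟨h1, h2⟩ | ⟨h1, h2⟩
            · rfl
            · exact absurd h2 hxS
            · exact absurd h2 hxS'
          · rintro rfl
            exact rfl
        change IsCompact (frontier (f ⁻¹' {f x})); rw [show f ⁻¹' {f x} = {x} from this]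
        exact isCompact_singleton.of_isClosed_subset isClosed_frontier
          (frontier_subset_closure.trans (by rw [closure_singleton]))
  -- derive the contradiction
  have heq : f xa = f xb := by
    apply h (Quotient s) f hcont hbd
    · rw [hfibSa]; exact hSanc
    · rw [hfibSb]; exact hSbnc
  rcases Quotient.exact heq with rfl | ⟨h1, h2⟩ | ⟨h1, h2⟩
  · exact hdisj xa hxa hxb
  · exact hdisj xb h2 hxb
  · exact hdisj xa hxa h1
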